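/- Let k be a commutative ring, G a finite group, and C = FI_G. For every m ∈ ℕ, the coinduction functor Q applied to the free module kC e_m satisfies: Q(kC e_m) is isomorphic, as a C-module, to the direct sum kC e_m ⊕ kC e_{m+1}. -/

import Mathlib

open CategoryTheory CategoryTheory.Limits

attribute [local instance] CategoryTheory.Abelian.hasFiniteBiproducts

/-- Objects of the category `FI_G`: natural numbers (bundled). -/
structure FIG (G : Type) where
  n : ℕ

variable {G : Type}

/-- The category `FI_G`: a morphism `X ⟶ Y` is a pair `(f, c)` where
`f : Fin X.n ↪ Fin Y.n` is an injective map and `c : Fin X.n → G` is arbitrary,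
with composition `(f₂,c₂) ∘ (f₁,c₁) = (f₂ ∘ f₁, t ↦ c₂(f₁ t) * c₁ t)`. -/
instance FIG.category [Group G] : Category (FIG G) where
  Hom X Y := (Fin X.n ↪ Fin Y.n) × (Fin X.n → G)
  id X := ⟨Function.Embedding.refl _, fun _ => 1⟩
  comp f g := ⟨f.1.trans g.1, fun t => g.2 (f.1 t) * f.2 t⟩
  id_comp f := Prod.ext rfl (funext fun t => mul_one _)
  comp_id f := Prod.ext rfl (funext fun t => one_mul _)
  assoc f g h := by
    refine Prod.ext rfl ?_
    funext t
    dsimp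
    rw [mul_assoc]
    rfl

/-- The free `FI_G`-module `kC e_n`, sending `m` to the free `k`-module
on the hom-set `FI_G(n, m)`. -/
noncomputable def FIG.free (k : Type) [CommRing k] (G : Type) [Group G] (n : ℕ) :
    FIG G ⥤ ModuleCat k :=
  coyoneda.obj (Opposite.op ⟨n⟩) ⋙ ModuleCat.free k

/-- An `FI_G`-module is finitely generated if it admits an epimorphism from a
finite direct sum `⨁ᵢ kC e_{nᵢ}` of free modules. -/
noncomputable def FIG.FinGen (k : Type) [CommRing k] [Group G]
    (V : FIG G ⥤ ModuleCat k) : Prop :=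
  ∃ (r : ℕ) (a : Fin r → ℕ) (p : (⨁ fun i : Fin r => FIG.free k G (a i)) ⟶ V), Epi p

/-- An `FI_G`-module `V` is finite dimensional if each `V(m)` is a
finite-dimensional `k`-vector space and `V(m) = 0` for all but finitely many `m`. -/
def FIG.FinDim (k : Type) [Field k] [Group G] (V : FIG G ⥤ ModuleCat k) : Prop :=
  (∀ X : FIG G, Module.Finite k (V.obj X)) ∧
    ∃ N : ℕ, ∀ X : FIG G, N < X.n → IsZero (V.obj X)

/-- An `FI_G`-module `F` is torsion-free if `Hom(T, F) = 0` for every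
finite-dimensional `FI_G`-module `T`. -/
def FIG.TorsionFree (k : Type) [Field k] [Group G] (F : FIG G ⥤ ModuleCat k) : Prop :=
  ∀ T : FIG G ⥤ ModuleCat k, FIG.FinDim k T → ∀ f : T ⟶ F, f = 0

/-- Extension of an injection `f : Fin m ↪ Fin n` to `Fin (m+1) ↪ Fin (n+1)`,
sending `0 ↦ 0` and `t + 1 ↦ f t + 1`. -/
def FIG.extEmb {m n : ℕ} (f : Fin m ↪ Fin n) : Fin (m + 1) ↪ Fin (n + 1) where
  toFun := Fin.cons 0 (fun t => (f t).succ)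
  inj' := by
    intro a b h
    induction a using Fin.cases with
    | zero =>
      induction b using Fin.cases with
      | zero => rfl
      | succ j =>
        simp only [Fin.cons_zero, Fin.cons_succ] at h
        exact absurd h.symm (Fin.succ_ne_zero _)
    | succ i =>
      induction b using Fin.cases with
      | zero =>
        simp only [Fin.cons_zero, Fin.cons_succ] at h
        exact absurd h (Fin.succ_ne_zero _)
      | succ j =>
        simp only [Fin.cons_succ] at h
        exact congrArg Fin.succ (f.injective (Fin.succ_injective _ h))

/-- The functor `ι : FI_G → FI_G`, `ι(n) = 1 ⊙ n`: on objects `n ↦ n + 1`, and on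
a morphism `(f, c)` it gives `(f', c')` with `f' 0 = 0`, `c' 0 = 1`,
`f' (t+1) = f t + 1` and `c' (t+1) = c t`. -/
def FIG.iota (G : Type) [Group G] : FIG G ⥤ FIG G where
  obj X := ⟨X.n + 1⟩
  map f := ⟨FIG.extEmb f.1, Fin.cons 1 f.2⟩
  map_id X := by
    refine Prod.ext (DFunLike.ext _ _ fun t => ?_) (funext fun t => ?_) <;>
      induction t using Fin.cases <;> rfl
  map_comp {X Y Z} f g := by
    refine Prod.ext (DFunLike.ext _ _ fun t => ?_) (funext fun t => ?_) <;>
      induction t using Fin.cases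
    · rfl
    · rfl
    · exact (one_mul 1).symm
    · rfl

/-- The shift functor `S : V ↦ V ∘ ι` on `FI_G`-modules. -/
def FIG.S (k : Type) [CommRing k] (G : Type) [Group G] :
    (FIG G ⥤ ModuleCat k) ⥤ (FIG G ⥤ ModuleCat k) :=
  (Functor.whiskeringLeft (FIG G) (FIG G) (ModuleCat k)).obj (FIG.iota G)

namespace FIG

/-! ### Auxiliary material for the coinduction theorem -/

section Aux

variable {G : Type} [Group G]

instance (X : FIG G) : NeZero ((iota G).obj X).n := ⟨Nat.succ_ne_zero X.n⟩

theorem homext {X Y : FIG G} {p q : X ⟶ Y} (h1 : ∀ t, p.1 t = q.1 t)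
    (h2 : ∀ t, p.2 t = q.2 t) : p = q :=
  Prod.ext (DFunLike.ext _ _ h1) (funext h2)

theorem comp_fst {X Y Z : FIG G} (p : X ⟶ Y) (β : Y ⟶ Z) (t : Fin X.n) :
    (p ≫ β).1 t = β.1 (p.1 t) := rfl

theorem comp_snd {X Y Z : FIG G} (p : X ⟶ Y) (β : Y ⟶ Z) (t : Fin X.n) :
    (p ≫ β).2 t = β.2 (p.1 t) * p.2 t := rfl

theorem iota_map_fst {Y Z : FIG G} (β : Y ⟶ Z) (x : Fin (Y.n + 1)) :
    ((iota G).map β).1 x = extEmb β.1 x := rfl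

theorem iota_map_snd {Y Z : FIG G} (β : Y ⟶ Z) (x : Fin (Y.n + 1)) :
    ((iota G).map β).2 x = Fin.cons (α := fun _ => G) 1 β.2 x := rfl

noncomputable instance homFintype [Finite G] (X Y : FIG G) : Fintype (X ⟶ Y) := by
  classical
  letI := Fintype.ofFinite G
  exact inferInstanceAs (Fintype ((Fin X.n ↪ Fin Y.n) × (Fin X.n → G)))

/-- The morphism `X ⟶ ι X` given by `t ↦ t+1` with trivial labels. -/
def uHom (X : FIG G) : X ⟶ (iota G).obj X :=
  ⟨⟨Fin.succ, Fin.succ_injective _⟩, fun _ => 1⟩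

theorem uHom_fst (X : FIG G) (t : Fin X.n) : (uHom X).1 t = t.succ := rfl
theorem uHom_snd (X : FIG G) (t : Fin X.n) : (uHom X).2 t = 1 := rfl

/-- The morphism `X ⟶ ι X` given by `t ↦ swap 0 (s+1) (t+1)`, with label `h₀⁻¹` at `s`. -/
def aHom (X : FIG G) (s : Fin X.n) (h₀ : G) : X ⟶ (iota G).obj X :=
  ⟨⟨fun t => Equiv.swap 0 s.succ t.succ,
    fun a b hab => Fin.succ_injective _ ((Equiv.swap 0 s.succ).injective hab)⟩,
   fun t => if t = s then h₀⁻¹ else 1⟩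

theorem aHom_fst (X : FIG G) (s : Fin X.n) (h₀ : G) (t : Fin X.n) :
    (aHom X s h₀).1 t = Equiv.swap 0 s.succ t.succ := rfl
theorem aHom_snd (X : FIG G) (s : Fin X.n) (h₀ : G) (t : Fin X.n) :
    (aHom X s h₀).2 t = if t = s then h₀⁻¹ else 1 := rfl

/-- The tail of a morphism `m+1 ⟶ Y`. -/
def tl {m : ℕ} {Y : FIG G} (p : (⟨m + 1⟩ : FIG G) ⟶ Y) : (⟨m⟩ : FIG G) ⟶ Y :=
  ⟨⟨fun t => p.1 t.succ, fun a b h => Fin.succ_injective _ (p.1.injective h)⟩,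
   fun t => p.2 t.succ⟩

theorem tl_fst {m : ℕ} {Y : FIG G} (p : (⟨m + 1⟩ : FIG G) ⟶ Y) (t : Fin m) :
    (tl p).1 t = p.1 t.succ := rfl
theorem tl_snd {m : ℕ} {Y : FIG G} (p : (⟨m + 1⟩ : FIG G) ⟶ Y) (t : Fin m) :
    (tl p).2 t = p.2 t.succ := rfl

theorem tl_comp {m : ℕ} {Y Z : FIG G} (p : (⟨m + 1⟩ : FIG G) ⟶ Y) (β : Y ⟶ Z) :
    tl (p ≫ β) = tl p ≫ β := rfl

theorem comp_injective {X Y Z : FIG G} (β : Y ⟶ Z) :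
    Function.Injective (fun p : X ⟶ Y => p ≫ β) := by
  intro p q h
  have h1 : ∀ t, p.1 t = q.1 t := fun t =>
    β.1.injective (congrArg (fun r : X ⟶ Z => r.1 t) h)
  refine homext h1 fun t => ?_
  have h2 := congrArg (fun r : X ⟶ Z => r.2 t) h
  simp only [comp_snd] at h2
  rw [h1 t] at h2
  exact mul_left_cancel h2

theorem exists_comp_eq {X Y Z : FIG G} (β : Y ⟶ Z) (q : X ⟶ Z)
    (h : ∀ t, q.1 t ∈ Set.range β.1) : ∃ p : X ⟶ Y, p ≫ β = q := by
  choose f hf using h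
  have hfinj : Function.Injective f := fun a b hab => by
    apply q.1.injective; rw [← hf a, ← hf b, hab]
  refine ⟨⟨⟨f, hfinj⟩, fun t => (β.2 (f t))⁻¹ * q.2 t⟩, homext (fun t => hf t) fun t => ?_⟩
  show β.2 (f t) * ((β.2 (f t))⁻¹ * q.2 t) = q.2 t
  rw [← mul_assoc, mul_inv_cancel, one_mul]

/-- Restriction of a morphism `m ⟶ ι X` avoiding `0` to a morphism `m ⟶ X`. -/
def res1 {m : ℕ} {X : FIG G} (q : (⟨m⟩ : FIG G) ⟶ (iota G).obj X)
    (hq : ∀ t, q.1 t ≠ 0) : (⟨m⟩ : FIG G) ⟶ X :=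
  ⟨⟨fun t => (q.1 t).pred (hq t), fun a b h => q.1.injective (by
      have h2 := congrArg Fin.succ h
      beta_reduce at h2
      erw [Fin.succ_pred, Fin.succ_pred] at h2
      exact h2)⟩, q.2⟩

theorem res1_fst {m : ℕ} {X : FIG G} (q : (⟨m⟩ : FIG G) ⟶ (iota G).obj X)
    (hq : ∀ t, q.1 t ≠ 0) (t : Fin m) : (res1 q hq).1 t = (q.1 t).pred (hq t) := rfl
theorem res1_snd {m : ℕ} {X : FIG G} (q : (⟨m⟩ : FIG G) ⟶ (iota G).obj X)
    (hq : ∀ t, q.1 t ≠ 0) (t : Fin m) : (res1 q hq).2 t = q.2 t := rfl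

theorem res1_congr {m : ℕ} {X : FIG G} {q q' : (⟨m⟩ : FIG G) ⟶ (iota G).obj X}
    (h : q = q') (hq : ∀ t, q.1 t ≠ 0) (hq' : ∀ t, q'.1 t ≠ 0) :
    res1 q hq = res1 q' hq' := by subst h; rfl

theorem tl_ne_zero {m : ℕ} {X : FIG G} (q : (⟨m + 1⟩ : FIG G) ⟶ (iota G).obj X)
    (h : q.1 0 = 0) : ∀ t, (tl q).1 t ≠ 0 := fun t ht =>
  Fin.succ_ne_zero t (q.1.injective (ht.trans h.symm))

theorem extEmb_zero {a b : ℕ} (f : Fin a ↪ Fin b) : extEmb f 0 = 0 := by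
  rfl

theorem extEmb_succ {a b : ℕ} (f : Fin a ↪ Fin b) (t : Fin a) :
    extEmb f t.succ = (f t).succ := by
  rfl

theorem extEmb_ne_zero {a b : ℕ} (f : Fin a ↪ Fin b) (x : Fin (a + 1)) (hx : x ≠ 0) :
    extEmb f x ≠ 0 := by
  induction x using Fin.cases with
  | zero => exact absurd rfl hx
  | succ j => rw [extEmb_succ]; exact Fin.succ_ne_zero _

theorem extEmb_eq_zero_iff {a b : ℕ} (f : Fin a ↪ Fin b) (x : Fin (a + 1)) :
    extEmb f x = 0 ↔ x = 0 := by
  constructor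
  · intro h; by_contra hx; exact extEmb_ne_zero f x hx h
  · rintro rfl; exact extEmb_zero f

theorem extEmb_of_ne_zero {a b : ℕ} (f : Fin a ↪ Fin b) (x : Fin (a + 1)) (hx : x ≠ 0) :
    extEmb f x = (f (x.pred hx)).succ := by
  conv_lhs => rw [← Fin.succ_pred x hx]
  rw [extEmb_succ]

theorem cons_of_ne_zero {a : ℕ} {α : Type} (y : α) (g : Fin a → α) (x : Fin (a + 1))
    (hx : x ≠ 0) : Fin.cons (α := fun _ => α) y g x = g (x.pred hx) := by
  conv_lhs => rw [← Fin.succ_pred x hx]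
  rw [Fin.cons_succ]

/-- Naturality square for `uHom`. -/
theorem comp_uHom {Y Z : FIG G} (β : Y ⟶ Z) :
    β ≫ uHom Z = uHom Y ≫ (iota G).map β := by
  refine homext (fun t => ?_) (fun t => ?_)
  · rw [comp_fst, comp_fst, uHom_fst, uHom_fst, iota_map_fst, extEmb_succ]
  · rw [comp_snd, comp_snd, uHom_snd, uHom_snd]
    exact (one_mul _).trans (mul_one _).symm

/-- Naturality square for `aHom`. -/
theorem comp_aHom {Y Z : FIG G} (β : Y ⟶ Z) (s : Fin Y.n) (h₀ : G) :
    β ≫ aHom Z (β.1 s) (β.2 s * h₀) = aHom Y s h₀ ≫ (iota G).map β := by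
  refine homext (fun t => ?_) (fun t => ?_) <;>
    rcases eq_or_ne t s with rfl | hts
  · rw [comp_fst, comp_fst, aHom_fst, aHom_fst, iota_map_fst,
      Equiv.swap_apply_right, Equiv.swap_apply_right, extEmb_zero]
  · have h1 : t.succ ≠ (0 : Fin (Y.n + 1)) := Fin.succ_ne_zero t
    have h2 : t.succ ≠ s.succ := fun h => hts (Fin.succ_injective _ h)
    have h3 : (β.1 t).succ ≠ (0 : Fin (Z.n + 1)) := Fin.succ_ne_zero _
    have h4 : (β.1 t).succ ≠ (β.1 s).succ := fun h =>
      hts (β.1.injective (Fin.succ_injective _ h))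
    rw [comp_fst, comp_fst, aHom_fst, aHom_fst, iota_map_fst,
      Equiv.swap_apply_of_ne_of_ne h3 h4, Equiv.swap_apply_of_ne_of_ne h1 h2, extEmb_succ]
  · rw [comp_snd, comp_snd, aHom_snd, aHom_snd, aHom_fst, iota_map_snd,
      if_pos rfl, if_pos rfl, Equiv.swap_apply_right, Fin.cons_zero,
      mul_inv_rev, one_mul, mul_assoc, inv_mul_cancel, mul_one]
  · have h1 : t.succ ≠ (0 : Fin (Y.n + 1)) := Fin.succ_ne_zero t
    have h2 : t.succ ≠ s.succ := fun h => hts (Fin.succ_injective _ h)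
    have h5 : β.1 t ≠ β.1 s := fun h => hts (β.1.injective h)
    rw [comp_snd, comp_snd, aHom_snd, aHom_snd, aHom_fst, iota_map_snd,
      if_neg h5, if_neg hts, Equiv.swap_apply_of_ne_of_ne h1 h2, Fin.cons_succ,
      one_mul, mul_one]

theorem comp_aHom_notin {Y Z : FIG G} (β : Y ⟶ Z) (s : Fin Z.n) (h₀ : G)
    (hs : ∀ t, β.1 t ≠ s) : β ≫ aHom Z s h₀ = β ≫ uHom Z := by
  refine homext (fun t => ?_) (fun t => ?_)
  · rw [comp_fst, comp_fst, aHom_fst, uHom_fst]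
    exact Equiv.swap_apply_of_ne_of_ne (Fin.succ_ne_zero _)
      (fun h => hs t (Fin.succ_injective _ h))
  · rw [comp_snd, comp_snd, aHom_snd, uHom_snd, if_neg (hs t)]

theorem aHom_iota (X : FIG G) :
    aHom ((iota G).obj X) 0 1 = (iota G).map (uHom X) := by
  refine homext (fun t => ?_) (fun t => ?_)
  · change Fin (X.n + 1) at t
    show Equiv.swap 0 (0 : Fin (X.n + 1)).succ t.succ = extEmb (uHom X).1 t
    induction t using Fin.cases with
    | zero =>
      rw [Equiv.swap_apply_right]
      exact (extEmb_zero _).symm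
    | succ j =>
      have h1 : j.succ.succ ≠ (0 : Fin (X.n + 2)) := Fin.succ_ne_zero _
      have h2 : j.succ.succ ≠ (0 : Fin (X.n + 1)).succ := fun h =>
        Fin.succ_ne_zero j (Fin.succ_injective _ h)
      rw [Equiv.swap_apply_of_ne_of_ne h1 h2, extEmb_succ, uHom_fst]
      rfl
  · change Fin (X.n + 1) at t
    show (if t = (0 : Fin (X.n + 1)) then (1 : G)⁻¹ else 1)
        = Fin.cons (α := fun _ => G) 1 (uHom X).2 t
    induction t using Fin.cases with
    | zero => rw [if_pos rfl, inv_one, Fin.cons_zero]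
    | succ j => rw [if_neg (Fin.succ_ne_zero j), Fin.cons_succ, uHom_snd]

/-- Extension of a morphism `m ⟶ ι X` avoiding `0` to a morphism `m+1 ⟶ ι X`
sending the new point to `0` with trivial label. -/
def consHom {m : ℕ} {X : FIG G} (r : (⟨m⟩ : FIG G) ⟶ (iota G).obj X)
    (hr : ∀ t, r.1 t ≠ 0) : (⟨m + 1⟩ : FIG G) ⟶ (iota G).obj X :=
  ⟨⟨Fin.cons 0 r.1, by
      intro a b h
      induction a using Fin.cases with
      | zero =>
        induction b using Fin.cases with
        | zero => rfl
        | succ j =>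
          rw [Fin.cons_zero, Fin.cons_succ] at h
          exact absurd h.symm (hr j)
      | succ i =>
        induction b using Fin.cases with
        | zero =>
          rw [Fin.cons_zero, Fin.cons_succ] at h
          exact absurd h (hr i)
        | succ j =>
          rw [Fin.cons_succ, Fin.cons_succ] at h
          exact congrArg Fin.succ (r.1.injective h)⟩,
   Fin.cons 1 r.2⟩

theorem consHom_fst {m : ℕ} {X : FIG G} (r : (⟨m⟩ : FIG G) ⟶ (iota G).obj X)
    (hr : ∀ t, r.1 t ≠ 0) (x : Fin (m + 1)) :
    (consHom r hr).1 x = Fin.cons (α := fun _ => Fin (X.n + 1)) 0 r.1 x := rfl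
theorem consHom_snd {m : ℕ} {X : FIG G} (r : (⟨m⟩ : FIG G) ⟶ (iota G).obj X)
    (hr : ∀ t, r.1 t ≠ 0) (x : Fin (m + 1)) :
    (consHom r hr).2 x = Fin.cons (α := fun _ => G) 1 r.2 x := rfl

theorem tl_consHom {m : ℕ} {X : FIG G} (r : (⟨m⟩ : FIG G) ⟶ (iota G).obj X)
    (hr : ∀ t, r.1 t ≠ 0) : tl (consHom r hr) = r := by
  refine homext (fun t => ?_) (fun t => ?_)
  · rfl
  · rfl

theorem consHom_fst_zero {m : ℕ} {X : FIG G} (r : (⟨m⟩ : FIG G) ⟶ (iota G).obj X)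
    (hr : ∀ t, r.1 t ≠ 0) : (consHom r hr).1 0 = 0 := by
  rfl

theorem consHom_snd_zero {m : ℕ} {X : FIG G} (r : (⟨m⟩ : FIG G) ⟶ (iota G).obj X)
    (hr : ∀ t, r.1 t ≠ 0) : (consHom r hr).2 0 = 1 := by
  rw [consHom_snd, Fin.cons_zero]

theorem hom_eq_of_head_tail {m : ℕ} {Y : FIG G} {v q : (⟨m + 1⟩ : FIG G) ⟶ Y}
    (h0 : v.1 0 = q.1 0) (h1 : v.2 0 = q.2 0) (ht : tl v = tl q) : v = q := by
  refine homext (fun t => ?_) (fun t => ?_)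
  · induction t using Fin.cases with
    | zero => exact h0
    | succ j => exact congrArg (fun r : (⟨m⟩ : FIG G) ⟶ Y => r.1 j) ht
  · induction t using Fin.cases with
    | zero => exact h1
    | succ j => exact congrArg (fun r : (⟨m⟩ : FIG G) ⟶ Y => r.2 j) ht

end Aux

end FIG
namespace FIG

section Mod

variable {G : Type} [Group G] (k : Type) [CommRing k]

theorem free_map_mk {a : ℕ} {Y Z : FIG G} (β : Y ⟶ Z) (p : (⟨a⟩ : FIG G) ⟶ Y) :
    (free k G a).map β (ModuleCat.freeMk p) = ModuleCat.freeMk (p ≫ β) :=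
  ModuleCat.free_map_apply (R := k) (TypeCat.ofHom fun r : (⟨a⟩ : FIG G) ⟶ Y => r ≫ β) p

theorem free_map_eq {a : ℕ} {Y Z : FIG G} (β : Y ⟶ Z)
    (x : ((⟨a⟩ : FIG G) ⟶ Y) →₀ k) :
    (free k G a).map β x = Finsupp.mapDomain (fun r => r ≫ β) x := rfl

theorem lapply_freeMk {α : Type} [DecidableEq α] (x y : α) :
    Finsupp.lapply (R := k) y (ModuleCat.freeMk (R := k) x) = if x = y then 1 else 0 := by
  show (Finsupp.single x (1 : k)) y = _
  rw [Finsupp.single_apply]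

theorem single_eq_smul_freeMk {α : Type} (r : α) (b : k) :
    (Finsupp.single r b : α →₀ k) = b • ModuleCat.freeMk (R := k) r := by
  show _ = b • Finsupp.single r (1 : k)
  rw [Finsupp.smul_single', mul_one]

theorem map_map {V : FIG G ⥤ ModuleCat k} {A B C : FIG G} (f : A ⟶ B) (g : B ⟶ C)
    (x : V.obj A) : V.map g (V.map f x) = V.map (f ≫ g) x := by
  rw [V.map_comp]; rfl

theorem nat_app {V W : FIG G ⥤ ModuleCat k} (f : V ⟶ W) {A B : FIG G} (γ : A ⟶ B)
    (x : V.obj A) : f.app B (V.map γ x) = W.map γ (f.app A x) :=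
  ConcreteCategory.congr_hom (f.naturality γ) x

theorem phi_nat {m : ℕ} {V : FIG G ⥤ ModuleCat k} (φ : (S k G).obj V ⟶ free k G m)
    {Y Z : FIG G} (β : Y ⟶ Z) (x : V.obj ((iota G).obj Y)) :
    φ.app Z (V.map ((iota G).map β) x) = (free k G m).map β (φ.app Y x) :=
  ConcreteCategory.congr_hom (φ.naturality β) x

/-! ### The two counit components -/

theorem res1_comp {m : ℕ} {X Y : FIG G} (q : (⟨m⟩ : FIG G) ⟶ (iota G).obj X)
    (β : X ⟶ Y) (h : ∀ t, q.1 t ≠ 0) (h' : ∀ t, (q ≫ (iota G).map β).1 t ≠ 0) :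
    res1 (q ≫ (iota G).map β) h' = res1 q h ≫ β := by
  refine homext (fun t => ?_) (fun t => ?_)
  · apply Fin.succ_injective
    erw [res1_fst, Fin.succ_pred, comp_fst, iota_map_fst,
      extEmb_of_ne_zero β.1 (q.1 t) (h t), comp_fst, res1_fst]
  · erw [res1_snd, comp_snd, comp_snd, res1_snd, res1_fst, iota_map_snd,
      cons_of_ne_zero _ _ _ (h t)]

noncomputable def eps1App (m : ℕ) (X : FIG G) :
    (ModuleCat.free k).obj ((⟨m⟩ : FIG G) ⟶ (iota G).obj X)
      ⟶ (ModuleCat.free k).obj ((⟨m⟩ : FIG G) ⟶ X) :=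
  ModuleCat.freeDesc <| TypeCat.ofHom fun (q : (⟨m⟩ : FIG G) ⟶ (iota G).obj X) =>
    if h : ∀ t, q.1 t ≠ 0 then ModuleCat.freeMk (res1 q h) else 0

theorem eps1App_mk_pos (m : ℕ) (X : FIG G) (q : (⟨m⟩ : FIG G) ⟶ (iota G).obj X)
    (h : ∀ t, q.1 t ≠ 0) :
    eps1App k m X (ModuleCat.freeMk q) = ModuleCat.freeMk (res1 q h) := by
  simp only [eps1App, ModuleCat.freeDesc_apply]
  exact dif_pos h

theorem eps1App_mk_neg (m : ℕ) (X : FIG G) (q : (⟨m⟩ : FIG G) ⟶ (iota G).obj X)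
    (h : ¬ ∀ t, q.1 t ≠ 0) : eps1App k m X (ModuleCat.freeMk q) = 0 := by
  simp only [eps1App, ModuleCat.freeDesc_apply]
  exact dif_neg h

noncomputable def eps1 (m : ℕ) : (S k G).obj (free k G m) ⟶ free k G m where
  app X := eps1App k m X
  naturality X Y β := by
    refine ModuleCat.free_hom_ext fun q => ?_
    show eps1App k m Y ((free k G m).map ((iota G).map β) (ModuleCat.freeMk q))
        = (free k G m).map β (eps1App k m X (ModuleCat.freeMk q))
    rw [free_map_mk]
    by_cases h : ∀ t, q.1 t ≠ 0
    · have h' : ∀ t, (q ≫ (iota G).map β).1 t ≠ 0 := fun t => by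
        erw [comp_fst, iota_map_fst]
        exact extEmb_ne_zero β.1 (q.1 t) (h t)
      rw [eps1App_mk_pos k m Y _ h', eps1App_mk_pos k m X q h, free_map_mk,
        res1_comp q β h h']
    · have h' : ¬ ∀ t, (q ≫ (iota G).map β).1 t ≠ 0 := by
        intro hall
        push_neg at h
        obtain ⟨t₀, ht₀⟩ := h
        exact hall t₀ (by erw [comp_fst, iota_map_fst, ht₀, extEmb_zero]; rfl)
      erw [eps1App_mk_neg k m Y _ h', eps1App_mk_neg k m X q h, map_zero]
      rfl

theorem eps1_mk_pos (m : ℕ) (X : FIG G) (q : (⟨m⟩ : FIG G) ⟶ (iota G).obj X)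
    (h : ∀ t, q.1 t ≠ 0) :
    (eps1 k m).app X (ModuleCat.freeMk q) = ModuleCat.freeMk (res1 q h) :=
  eps1App_mk_pos k m X q h

theorem eps1_mk_neg (m : ℕ) (X : FIG G) (q : (⟨m⟩ : FIG G) ⟶ (iota G).obj X)
    (h : ¬ ∀ t, q.1 t ≠ 0) : (eps1 k m).app X (ModuleCat.freeMk q) = 0 :=
  eps1App_mk_neg k m X q h

noncomputable def eps2App (m : ℕ) (X : FIG G) :
    (ModuleCat.free k).obj ((⟨m + 1⟩ : FIG G) ⟶ (iota G).obj X)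
      ⟶ (ModuleCat.free k).obj ((⟨m⟩ : FIG G) ⟶ X) :=
  ModuleCat.freeDesc <| TypeCat.ofHom fun (q : (⟨m + 1⟩ : FIG G) ⟶ (iota G).obj X) =>
    letI := Classical.decEq G
    if h : q.1 0 = 0 ∧ q.2 0 = 1 then
      ModuleCat.freeMk (res1 (tl q) (tl_ne_zero q h.1)) else 0

theorem eps2App_mk_pos (m : ℕ) (X : FIG G) (q : (⟨m + 1⟩ : FIG G) ⟶ (iota G).obj X)
    (h : q.1 0 = 0 ∧ q.2 0 = 1) :
    eps2App k m X (ModuleCat.freeMk q)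
      = ModuleCat.freeMk (res1 (tl q) (tl_ne_zero q h.1)) := by
  simp only [eps2App, ModuleCat.freeDesc_apply]
  exact dif_pos h

theorem eps2App_mk_neg (m : ℕ) (X : FIG G) (q : (⟨m + 1⟩ : FIG G) ⟶ (iota G).obj X)
    (h : ¬ (q.1 0 = 0 ∧ q.2 0 = 1)) : eps2App k m X (ModuleCat.freeMk q) = 0 := by
  simp only [eps2App, ModuleCat.freeDesc_apply]
  exact dif_neg h

noncomputable def eps2 (m : ℕ) : (S k G).obj (free k G (m + 1)) ⟶ free k G m where
  app X := eps2App k m X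
  naturality X Y β := by
    refine ModuleCat.free_hom_ext fun q => ?_
    show eps2App k m Y ((free k G (m + 1)).map ((iota G).map β) (ModuleCat.freeMk q))
        = (free k G m).map β (eps2App k m X (ModuleCat.freeMk q))
    rw [free_map_mk]
    by_cases h : q.1 0 = 0 ∧ q.2 0 = 1
    · have h1 : (q ≫ (iota G).map β).1 0 = 0 := by
        erw [comp_fst, iota_map_fst, h.1, extEmb_zero]
        rfl
      have h2 : (q ≫ (iota G).map β).2 0 = 1 := by
        erw [comp_snd, iota_map_snd, h.1, Fin.cons_zero, one_mul, h.2]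
      rw [eps2App_mk_pos k m Y _ ⟨h1, h2⟩, eps2App_mk_pos k m X q h, free_map_mk]
      congr 1
      rw [res1_congr (tl_comp q ((iota G).map β)) (tl_ne_zero _ h1)
        (fun t => by rw [← tl_comp]; exact tl_ne_zero _ h1 t)]
      exact res1_comp (tl q) β (tl_ne_zero q h.1) _
    · have h' : ¬ ((q ≫ (iota G).map β).1 0 = 0 ∧ (q ≫ (iota G).map β).2 0 = 1) := by
        intro hc
        refine h ⟨?_, ?_⟩
        · have := hc.1
          erw [comp_fst, iota_map_fst] at this
          exact (extEmb_eq_zero_iff β.1 (q.1 0)).mp this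
        · have h0 : q.1 0 = 0 := by
            have := hc.1
            erw [comp_fst, iota_map_fst] at this
            exact (extEmb_eq_zero_iff β.1 (q.1 0)).mp this
          have := hc.2
          erw [comp_snd, iota_map_snd, h0, Fin.cons_zero, one_mul] at this
          exact this
      erw [eps2App_mk_neg k m Y _ h', eps2App_mk_neg k m X q h, map_zero]
      rfl

theorem eps2_mk_pos (m : ℕ) (X : FIG G) (q : (⟨m + 1⟩ : FIG G) ⟶ (iota G).obj X)
    (h : q.1 0 = 0 ∧ q.2 0 = 1) :
    (eps2 k m).app X (ModuleCat.freeMk q)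
      = ModuleCat.freeMk (res1 (tl q) (tl_ne_zero q h.1)) :=
  eps2App_mk_pos k m X q h

theorem eps2_mk_neg (m : ℕ) (X : FIG G) (q : (⟨m + 1⟩ : FIG G) ⟶ (iota G).obj X)
    (h : ¬ (q.1 0 = 0 ∧ q.2 0 = 1)) : (eps2 k m).app X (ModuleCat.freeMk q) = 0 :=
  eps2App_mk_neg k m X q h

end Mod

end FIG
namespace FIG

section Psi

variable {G : Type} [Group G] (k : Type) [CommRing k]

/-- The coefficient functional used to reconstruct the `kC e_{m+1}`-component. -/
noncomputable def cF {m : ℕ} {V : FIG G ⥤ ModuleCat k} (φ : (S k G).obj V ⟶ free k G m)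
    {Y : FIG G} (p : (⟨m + 1⟩ : FIG G) ⟶ Y) : V.obj Y →ₗ[k] k :=
  (Finsupp.lapply (tl p)).comp
      ((V.map (aHom Y (p.1 0) (p.2 0)) ≫ φ.app Y : V.obj Y ⟶ (free k G m).obj Y).hom :
        V.obj Y →ₗ[k] ((⟨m⟩ : FIG G) ⟶ Y) →₀ k)
    - (Finsupp.lapply (tl p)).comp
      ((V.map (uHom Y) ≫ φ.app Y : V.obj Y ⟶ (free k G m).obj Y).hom :
        V.obj Y →ₗ[k] ((⟨m⟩ : FIG G) ⟶ Y) →₀ k)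

theorem cF_apply {m : ℕ} {V : FIG G ⥤ ModuleCat k} (φ : (S k G).obj V ⟶ free k G m)
    {Y : FIG G} (p : (⟨m + 1⟩ : FIG G) ⟶ Y) (v : V.obj Y) :
    cF k φ p v = Finsupp.lapply (R := k) (tl p)
        (φ.app Y (V.map (aHom Y (p.1 0) (p.2 0)) v))
      - Finsupp.lapply (R := k) (tl p) (φ.app Y (V.map (uHom Y) v)) := rfl

theorem cF_comp {m : ℕ} {V : FIG G ⥤ ModuleCat k} (φ : (S k G).obj V ⟶ free k G m)
    {Y Z : FIG G} (β : Y ⟶ Z) (p : (⟨m + 1⟩ : FIG G) ⟶ Y) (v : V.obj Y) :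
    cF k φ (p ≫ β) (V.map β v) = cF k φ p v := by
  rw [cF_apply, cF_apply]
  congr 1
  · rw [map_map]
    have e1 : β ≫ aHom Z ((p ≫ β).1 0) ((p ≫ β).2 0)
        = aHom Y (p.1 0) (p.2 0) ≫ (iota G).map β := by
      rw [comp_fst, comp_snd]
      exact comp_aHom β (p.1 0) (p.2 0)
    erw [e1, ← map_map, phi_nat, free_map_eq, tl_comp, Finsupp.lapply_apply (R := k),
      Finsupp.lapply_apply (R := k)]
    exact Finsupp.mapDomain_apply (comp_injective β) _ (tl p)
  · erw [map_map, comp_uHom, ← map_map, phi_nat, free_map_eq, tl_comp,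
      Finsupp.lapply_apply (R := k), Finsupp.lapply_apply (R := k)]
    exact Finsupp.mapDomain_apply (comp_injective β) _ (tl p)

theorem cF_zero {m : ℕ} {V : FIG G ⥤ ModuleCat k} (φ : (S k G).obj V ⟶ free k G m)
    {Y Z : FIG G} (β : Y ⟶ Z) (q : (⟨m + 1⟩ : FIG G) ⟶ Z) (v : V.obj Y)
    (hq : ¬ ∀ t, q.1 t ∈ Set.range β.1) : cF k φ q (V.map β v) = 0 := by
  rw [cF_apply, map_map, map_map]
  by_cases h0 : q.1 0 ∈ Set.range β.1
  · obtain ⟨s', hs'⟩ := h0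
    push_neg at hq
    obtain ⟨t₀, ht₀⟩ := hq
    have ht0 : ∃ j : Fin m, q.1 j.succ ∉ Set.range β.1 := by
      rcases Fin.eq_zero_or_eq_succ t₀ with rfl | ⟨j, rfl⟩
      · exact absurd ⟨s', hs'⟩ ht₀
      · exact ⟨j, ht₀⟩
    obtain ⟨j, hj⟩ := ht0
    have htl : tl q ∉ Set.range (fun r : (⟨m⟩ : FIG G) ⟶ Y => r ≫ β) := by
      rintro ⟨r, hr⟩
      exact hj ⟨r.1 j, by
        have := congrArg (fun w : (⟨m⟩ : FIG G) ⟶ Z => w.1 j) hr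
        exact this⟩
    have e1 : β ≫ aHom Z (q.1 0) (q.2 0)
        = aHom Y s' ((β.2 s')⁻¹ * q.2 0) ≫ (iota G).map β := by
      have h := comp_aHom β s' ((β.2 s')⁻¹ * q.2 0)
      rw [mul_inv_cancel_left, hs'] at h
      exact h
    erw [e1, comp_uHom, ← map_map, ← map_map, phi_nat, phi_nat, free_map_eq,
      free_map_eq, Finsupp.lapply_apply (R := k), Finsupp.lapply_apply (R := k),
      Finsupp.mapDomain_notin_range _ _ htl, Finsupp.mapDomain_notin_range _ _ htl,
      sub_self]
  · have hne : ∀ t, β.1 t ≠ q.1 0 := fun t ht => h0 ⟨t, ht⟩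
    rw [comp_aHom_notin β (q.1 0) (q.2 0) hne, sub_self]

noncomputable def psi2app [Finite G] {m : ℕ} {V : FIG G ⥤ ModuleCat k}
    (φ : (S k G).obj V ⟶ free k G m) (Y : FIG G) :
    V.obj Y →ₗ[k] ((⟨m + 1⟩ : FIG G) ⟶ Y) →₀ k :=
  ∑ p : (⟨m + 1⟩ : FIG G) ⟶ Y, (Finsupp.lsingle p).comp (cF k φ p)

theorem psi2app_apply [Finite G] {m : ℕ} {V : FIG G ⥤ ModuleCat k}
    (φ : (S k G).obj V ⟶ free k G m) (Y : FIG G) (v : V.obj Y) :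
    psi2app k φ Y v = ∑ p : (⟨m + 1⟩ : FIG G) ⟶ Y, Finsupp.single p (cF k φ p v) := by
  simp [psi2app]

theorem psi2app_coeff [Finite G] {m : ℕ} {V : FIG G ⥤ ModuleCat k}
    (φ : (S k G).obj V ⟶ free k G m) (Y : FIG G) (v : V.obj Y)
    (q : (⟨m + 1⟩ : FIG G) ⟶ Y) : psi2app k φ Y v q = cF k φ q v := by
  classical
  rw [psi2app_apply]
  rw [Finsupp.finset_sum_apply]
  rw [Finset.sum_eq_single q]
  · rw [Finsupp.single_eq_same]
  · intro p _ hp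
    exact Finsupp.single_eq_of_ne hp.symm
  · intro h
    exact absurd (Finset.mem_univ _) h

/-- The `kC e_m`-component of the reconstruction. -/
noncomputable def psi1 {m : ℕ} {V : FIG G ⥤ ModuleCat k}
    (φ : (S k G).obj V ⟶ free k G m) : V ⟶ free k G m where
  app Y := V.map (uHom Y) ≫ φ.app Y
  naturality Y Z β := by
    have h : V.map ((iota G).map β) ≫ φ.app Z = φ.app Y ≫ (free k G m).map β :=
      φ.naturality β
    erw [← Category.assoc, ← V.map_comp, comp_uHom, V.map_comp, Category.assoc, h,
      ← Category.assoc]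

/-- The `kC e_{m+1}`-component of the reconstruction. -/
noncomputable def psi2 [Finite G] {m : ℕ} {V : FIG G ⥤ ModuleCat k}
    (φ : (S k G).obj V ⟶ free k G m) : V ⟶ free k G (m + 1) where
  app Y := ModuleCat.ofHom (psi2app k φ Y)
  naturality Y Z β := by
    refine ModuleCat.hom_ext (LinearMap.ext fun v => ?_)
    refine Finsupp.ext fun q => ?_
    show psi2app k φ Z (V.map β v) q
        = Finsupp.mapDomain (fun r => r ≫ β) (psi2app k φ Y v) q
    rw [psi2app_coeff]
    by_cases hq : ∀ t, q.1 t ∈ Set.range β.1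
    · obtain ⟨p, rfl⟩ := exists_comp_eq β q hq
      rw [cF_comp]
      rw [← psi2app_coeff k φ Y v p]
      exact (Finsupp.mapDomain_apply (comp_injective β) _ p).symm
    · rw [cF_zero k φ β q v hq]
      refine (Finsupp.mapDomain_notin_range _ _ ?_).symm
      rintro ⟨p, rfl⟩
      exact hq fun t => ⟨p.1 t, (comp_fst p β t).symm⟩

theorem psi1_Smap {m : ℕ} {V W : FIG G ⥤ ModuleCat k} (f : V ⟶ W)
    (φ : (S k G).obj W ⟶ free k G m) :
    psi1 k ((S k G).map f ≫ φ) = f ≫ psi1 k φ := by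
  refine NatTrans.ext (funext fun Y => ?_)
  show V.map (uHom Y) ≫ (f.app ((iota G).obj Y) ≫ φ.app Y)
      = f.app Y ≫ (W.map (uHom Y) ≫ φ.app Y)
  erw [← Category.assoc, f.naturality (uHom Y), Category.assoc]

theorem cF_Smap {m : ℕ} {V W : FIG G ⥤ ModuleCat k} (f : V ⟶ W)
    (φ : (S k G).obj W ⟶ free k G m) {Y : FIG G} (p : (⟨m + 1⟩ : FIG G) ⟶ Y)
    (v : V.obj Y) : cF k ((S k G).map f ≫ φ) p v = cF k φ p (f.app Y v) := by
  rw [cF_apply, cF_apply]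
  have e : ∀ γ : Y ⟶ (iota G).obj Y,
      ((S k G).map f ≫ φ).app Y (V.map γ v) = φ.app Y (W.map γ (f.app Y v)) := by
    intro γ
    show φ.app Y (f.app ((iota G).obj Y) (V.map γ v)) = _
    rw [nat_app]
  rw [e, e]

theorem psi2_Smap [Finite G] {m : ℕ} {V W : FIG G ⥤ ModuleCat k} (f : V ⟶ W)
    (φ : (S k G).obj W ⟶ free k G m) :
    psi2 k ((S k G).map f ≫ φ) = f ≫ psi2 k φ := by
  refine NatTrans.ext (funext fun Y => ?_)
  refine ModuleCat.hom_ext (LinearMap.ext fun v => ?_)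
  refine Finsupp.ext fun q => ?_
  show psi2app k ((S k G).map f ≫ φ) Y v q = psi2app k φ Y (f.app Y v) q
  rw [psi2app_coeff, psi2app_coeff, cF_Smap]

end Psi

end FIG
namespace FIG

section Iden

variable {G : Type} [Group G] (k : Type) [CommRing k]

theorem comp_uHom_eps1 (m : ℕ) (X : FIG G) :
    (free k G m).map (uHom X) ≫ (eps1 k m).app X = 𝟙 ((free k G m).obj X) := by
  refine ModuleCat.free_hom_ext fun q => ?_
  show (eps1 k m).app X ((free k G m).map (uHom X) (ModuleCat.freeMk q))
      = ModuleCat.freeMk q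
  rw [free_map_mk]
  have hq : ∀ t, (q ≫ uHom X).1 t ≠ 0 := fun t => by
    rw [comp_fst, uHom_fst]; exact Fin.succ_ne_zero _
  rw [eps1_mk_pos k m X _ hq]
  congr 1
  refine homext (fun t => ?_) (fun t => ?_)
  · apply Fin.succ_injective
    erw [res1_fst, Fin.succ_pred, comp_fst, uHom_fst]
  · rw [res1_snd, comp_snd, uHom_snd, one_mul]

theorem eps1_u_elem (m : ℕ) (X : FIG G) (v : (⟨m⟩ : FIG G) ⟶ X) :
    (eps1 k m).app X (ModuleCat.freeMk (v ≫ uHom X)) = ModuleCat.freeMk v := by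
  have := ConcreteCategory.congr_hom (comp_uHom_eps1 k m X) (ModuleCat.freeMk v)
  rw [← free_map_mk]
  exact this

theorem eps1_a_elem (m : ℕ) (X : FIG G) (v : (⟨m⟩ : FIG G) ⟶ X) (s : Fin X.n) (h₀ : G)
    (hs : ∀ t, v.1 t ≠ s) :
    (eps1 k m).app X (ModuleCat.freeMk (v ≫ aHom X s h₀)) = ModuleCat.freeMk v := by
  have hfix : ∀ t, (v ≫ aHom X s h₀).1 t = (v.1 t).succ := fun t => by
    rw [comp_fst, aHom_fst]
    exact Equiv.swap_apply_of_ne_of_ne (Fin.succ_ne_zero _)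
      (fun h => hs t (Fin.succ_injective _ h))
  have hq : ∀ t, (v ≫ aHom X s h₀).1 t ≠ 0 := fun t => by
    rw [hfix t]; exact Fin.succ_ne_zero _
  rw [eps1_mk_pos k m X _ hq]
  congr 1
  refine homext (fun t => ?_) (fun t => ?_)
  · apply Fin.succ_injective
    erw [res1_fst, Fin.succ_pred, hfix t]
  · rw [res1_snd, comp_snd, aHom_snd, if_neg (hs t), one_mul]

theorem eps1_a_elem0 (m : ℕ) (X : FIG G) (v : (⟨m⟩ : FIG G) ⟶ X) (s : Fin X.n) (h₀ : G)
    (t₀ : Fin m) (ht : v.1 t₀ = s) :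
    (eps1 k m).app X (ModuleCat.freeMk (v ≫ aHom X s h₀)) = 0 := by
  refine eps1_mk_neg k m X _ fun hall => hall t₀ ?_
  rw [comp_fst, aHom_fst, ht]
  exact Equiv.swap_apply_right _ _

theorem eps2_u_elem (m : ℕ) (X : FIG G) (v : (⟨m + 1⟩ : FIG G) ⟶ X) :
    (eps2 k m).app X (ModuleCat.freeMk (v ≫ uHom X)) = 0 := by
  refine eps2_mk_neg k m X _ fun h => ?_
  have := h.1
  rw [comp_fst, uHom_fst] at this
  exact Fin.succ_ne_zero _ this

/-- Identity (I) : `Ψ¹(ε₁) = 𝟙`. -/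
theorem psi1_eps1 (m : ℕ) : psi1 k (eps1 k m) = 𝟙 (free k G m) := by
  refine NatTrans.ext (funext fun X => ?_)
  exact comp_uHom_eps1 k m X

/-- Identity (III) : `Ψ¹(ε₂) = 0`. -/
theorem psi1_eps2 (m : ℕ) : psi1 k (eps2 (G := G) k m) = 0 := by
  refine NatTrans.ext (funext fun X => ?_)
  show (free k G (m + 1)).map (uHom X) ≫ (eps2 k m).app X = 0
  refine ModuleCat.free_hom_ext fun v => ?_
  show (eps2 k m).app X ((free k G (m + 1)).map (uHom X) (ModuleCat.freeMk v))
      = (0 : (free k G (m + 1)).obj X ⟶ (free k G m).obj X) (ModuleCat.freeMk v)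
  rw [free_map_mk, eps2_u_elem]
  rfl

/-- Identity (II) : `Ψ²(ε₁) = 0`. -/
theorem psi2_eps1 [Finite G] (m : ℕ) : psi2 k (eps1 (G := G) k m) = 0 := by
  classical
  refine NatTrans.ext (funext fun X => ?_)
  refine ModuleCat.hom_ext (LinearMap.ext fun x => ?_)
  show psi2app k (eps1 k m) X x = 0
  suffices h : psi2app k (eps1 k m) X = 0 by rw [h]; rfl
  refine ModuleCat.hom_ext_iff.mp (ModuleCat.free_hom_ext (M := ModuleCat.of k (((⟨m + 1⟩ : FIG G) ⟶ X) →₀ k))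
    (f := ModuleCat.ofHom (psi2app k (eps1 k m) X)) (g := 0) (fun v => ?_))
  refine Finsupp.ext fun q => ?_
  show psi2app k (eps1 k m) X (ModuleCat.freeMk v) q = 0
  erw [psi2app_coeff, cF_apply]
  have e1 : (eps1 k m).app X ((free k G m).map (uHom X) (ModuleCat.freeMk v))
      = ModuleCat.freeMk v := by rw [free_map_mk, eps1_u_elem]
  have e2 : (free k G m).map (aHom X (q.1 0) (q.2 0)) (ModuleCat.freeMk v)
      = ModuleCat.freeMk (v ≫ aHom X (q.1 0) (q.2 0)) := free_map_mk k _ v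
  rw [e1, e2]
  by_cases hs : ∀ t, v.1 t ≠ q.1 0
  · rw [eps1_a_elem k m X v _ _ hs, sub_self]
  · push_neg at hs
    obtain ⟨t₀, ht₀⟩ := hs
    have hvq : v ≠ tl q := by
      intro h
      refine Fin.succ_ne_zero t₀ (q.1.injective ?_)
      have : v.1 t₀ = q.1 t₀.succ := by rw [h, tl_fst]
      rw [← this, ht₀]
    rw [eps1_a_elem0 k m X v _ _ t₀ ht₀, lapply_freeMk, if_neg hvq]
    simp only [map_zero, sub_zero]
    exact map_zero _

/-- Identity (IV) : `Ψ²(ε₂) = 𝟙`. -/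
theorem psi2_eps2 [Finite G] (m : ℕ) : psi2 k (eps2 k m) = 𝟙 (free k G (m + 1)) := by
  classical
  refine NatTrans.ext (funext fun X => ?_)
  refine ModuleCat.hom_ext (LinearMap.ext fun x => ?_)
  show psi2app k (eps2 k m) X x = x
  suffices h : psi2app k (eps2 k m) X
      = (𝟙 ((free k G (m + 1)).obj X) : (free k G (m + 1)).obj X ⟶ _).hom by
    rw [h]; rfl
  refine ModuleCat.hom_ext_iff.mp (ModuleCat.free_hom_ext (M := (free k G (m + 1)).obj X)
    (f := ModuleCat.ofHom (psi2app k (eps2 k m) X)) (g := 𝟙 _) (fun v => ?_))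
  refine Finsupp.ext fun q => ?_
  show psi2app k (eps2 k m) X (ModuleCat.freeMk v) q
      = Finsupp.lapply (R := k) q (ModuleCat.freeMk (R := k) v)
  erw [psi2app_coeff, cF_apply]
  have e2 : (free k G (m + 1)).map (aHom X (q.1 0) (q.2 0)) (ModuleCat.freeMk v)
      = ModuleCat.freeMk (v ≫ aHom X (q.1 0) (q.2 0)) := free_map_mk k _ v
  have e3 : (free k G (m + 1)).map (uHom X) (ModuleCat.freeMk v)
      = ModuleCat.freeMk (v ≫ uHom X) := free_map_mk k _ v
  rw [e2, e3, eps2_u_elem]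
  erw [map_zero (Finsupp.lapply (R := k) (M := k) (tl q)), sub_zero]
  by_cases hc : v.1 0 = q.1 0 ∧ v.2 0 = q.2 0
  · have h1 : (v ≫ aHom X (q.1 0) (q.2 0)).1 0 = 0 := by
      rw [comp_fst, aHom_fst, hc.1]
      exact Equiv.swap_apply_right _ _
    have h2 : (v ≫ aHom X (q.1 0) (q.2 0)).2 0 = 1 := by
      rw [comp_snd, aHom_snd, if_pos hc.1, hc.2, inv_mul_cancel]
    rw [eps2_mk_pos k m X _ ⟨h1, h2⟩]
    have hres : res1 (tl (v ≫ aHom X (q.1 0) (q.2 0))) (tl_ne_zero _ h1) = tl v := by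
      have hfix : ∀ t : Fin m, (v ≫ aHom X (q.1 0) (q.2 0)).1 t.succ
          = (v.1 t.succ).succ := fun t => by
        rw [comp_fst, aHom_fst]
        refine Equiv.swap_apply_of_ne_of_ne (Fin.succ_ne_zero _) fun h => ?_
        have hv : v.1 t.succ = q.1 0 := Fin.succ_injective _ h
        exact Fin.succ_ne_zero t (v.1.injective (hv.trans hc.1.symm))
      refine homext (fun t => ?_) (fun t => ?_)
      · apply Fin.succ_injective
        erw [res1_fst, Fin.succ_pred, tl_fst, tl_fst, hfix t]
      · rw [res1_snd, tl_snd, tl_snd, comp_snd, aHom_snd]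
        have : v.1 t.succ ≠ q.1 0 := fun hv =>
          Fin.succ_ne_zero t (v.1.injective (hv.trans hc.1.symm))
        rw [if_neg this, one_mul]
    rw [hres, lapply_freeMk, lapply_freeMk]
    by_cases hvq : v = q
    · subst hvq
      rw [if_pos rfl, if_pos rfl]
    · have htlne : tl v ≠ tl q := fun h =>
        hvq (hom_eq_of_head_tail hc.1 hc.2 h)
      rw [if_neg htlne, if_neg hvq]
  · have hcc : ¬ ((v ≫ aHom X (q.1 0) (q.2 0)).1 0 = 0
        ∧ (v ≫ aHom X (q.1 0) (q.2 0)).2 0 = 1) := by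
      intro hcc
      refine hc ⟨?_, ?_⟩
      · have h := hcc.1
        rw [comp_fst, aHom_fst] at h
        have : (v.1 0).succ = (q.1 0).succ := by
          apply (Equiv.swap 0 (q.1 0).succ).injective
          rw [h, Equiv.swap_apply_right]
          rfl
        exact Fin.succ_injective _ this
      · have h0 : v.1 0 = q.1 0 := by
          have h := hcc.1
          rw [comp_fst, aHom_fst] at h
          have : (v.1 0).succ = (q.1 0).succ := by
            apply (Equiv.swap 0 (q.1 0).succ).injective
            rw [h, Equiv.swap_apply_right]
            rfl
          exact Fin.succ_injective _ this
        have h := hcc.2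
        rw [comp_snd, aHom_snd, if_pos h0] at h
        rw [← inv_mul_cancel (q.2 0)] at h
        exact mul_left_cancel h
    have hvq : v ≠ q := fun h => hc (by subst h; exact ⟨rfl, rfl⟩)
    rw [eps2_mk_neg k m X _ hcc, lapply_freeMk, if_neg hvq]
    exact map_zero _

end Iden

end FIG
namespace FIG

section Recon

variable {G : Type} [Group G] (k : Type) [CommRing k]

/-- The summation identity identifying `ε₁` inside the `Ψ²`-sum. -/
theorem claimM [Finite G] (m : ℕ) (X : FIG G)
    (ξ : ((⟨m⟩ : FIG G) ⟶ (iota G).obj X) →₀ k) :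
    ∑ p : (⟨m + 1⟩ : FIG G) ⟶ (iota G).obj X,
        Finsupp.lapply (R := k) (tl p) ξ • (eps2 k m).app X (ModuleCat.freeMk p)
      = (eps1 k m).app X ξ := by
  classical
  induction ξ using Finsupp.induction_linear with
  | zero =>
    simp
    exact (map_zero _).symm
  | add f g hf hg =>
    erw [map_add]
    rw [← hf, ← hg, ← Finset.sum_add_distrib]
    refine Finset.sum_congr rfl fun p _ => ?_
    rw [map_add, add_smul]
  | single r b =>
    by_cases hr : ∀ t, r.1 t ≠ 0
    · rw [Finset.sum_eq_single (consHom r hr)]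
      · erw [Finsupp.lapply_apply, tl_consHom, Finsupp.single_eq_same,
          eps2_mk_pos k m X _ ⟨consHom_fst_zero r hr, consHom_snd_zero r hr⟩,
          res1_congr (tl_consHom r hr) _ hr,
          single_eq_smul_freeMk, map_smul, eps1_mk_pos k m X r hr]
      · intro p _ hp
        by_cases hcond : p.1 0 = 0 ∧ p.2 0 = 1
        · have hne : r ≠ tl p := by
            intro h
            exact hp (hom_eq_of_head_tail
              (hcond.1.trans (consHom_fst_zero r hr).symm)
              (hcond.2.trans (consHom_snd_zero r hr).symm)
              ((h ▸ rfl : tl p = r).trans (tl_consHom r hr).symm))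
          rw [Finsupp.lapply_apply, Finsupp.single_eq_of_ne hne.symm, zero_smul]
        · rw [eps2_mk_neg k m X _ hcond, smul_zero]
      · intro h
        exact absurd (Finset.mem_univ _) h
    · have hz : ∀ p ∈ (Finset.univ : Finset ((⟨m + 1⟩ : FIG G) ⟶ (iota G).obj X)),
          Finsupp.lapply (R := k) (tl p) (Finsupp.single r b)
            • (eps2 k m).app X (ModuleCat.freeMk p) = 0 := by
        intro p _
        by_cases hcond : p.1 0 = 0 ∧ p.2 0 = 1
        · have hne : r ≠ tl p := by
            intro h
            push_neg at hr
            obtain ⟨t₀, ht₀⟩ := hr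
            refine Fin.succ_ne_zero t₀ (p.1.injective ?_)
            rw [hcond.1]
            have : r.1 t₀ = p.1 t₀.succ := by rw [h, tl_fst]
            rw [← this, ht₀]
          rw [Finsupp.lapply_apply, Finsupp.single_eq_of_ne hne.symm, zero_smul]
        · rw [eps2_mk_neg k m X _ hcond, smul_zero]
      erw [Finset.sum_eq_zero hz, single_eq_smul_freeMk, map_smul,
        eps1_mk_neg k m X r hr, smul_zero]

/-- The reconstruction identity (V): `S Ψ¹(φ) ≫ ε₁ + S Ψ²(φ) ≫ ε₂ = φ`. -/
theorem recon [Finite G] {m : ℕ} {V : FIG G ⥤ ModuleCat k}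
    (φ : (S k G).obj V ⟶ free k G m) :
    (S k G).map (psi1 k φ) ≫ eps1 k m + (S k G).map (psi2 k φ) ≫ eps2 k m = φ := by
  classical
  refine NatTrans.ext (funext fun X => ?_)
  refine ModuleCat.hom_ext (LinearMap.ext fun v => ?_)
  show (eps1 k m).app X ((psi1 k φ).app ((iota G).obj X) v)
      + (eps2 k m).app X ((psi2 k φ).app ((iota G).obj X) v) = φ.app X v
  have hpsi2 : (psi2 k φ).app ((iota G).obj X) v
      = ∑ p : (⟨m + 1⟩ : FIG G) ⟶ (iota G).obj X,
          Finsupp.single p (cF k φ p v) := psi2app_apply k φ _ v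
  erw [hpsi2, map_sum]
  have hterm : ∀ p : (⟨m + 1⟩ : FIG G) ⟶ (iota G).obj X,
      (eps2 k m).app X (Finsupp.single p (cF k φ p v))
        = Finsupp.lapply (R := k) (tl p)
              ((free k G m).map (uHom X) (φ.app X v))
            • (eps2 k m).app X (ModuleCat.freeMk p)
          - Finsupp.lapply (R := k) (tl p)
              (φ.app ((iota G).obj X) (V.map (uHom ((iota G).obj X)) v))
            • (eps2 k m).app X (ModuleCat.freeMk p) := by
    intro p
    erw [single_eq_smul_freeMk, map_smul]
    by_cases hcond : p.1 0 = 0 ∧ p.2 0 = 1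
    · have hcf : cF k φ p v
          = Finsupp.lapply (R := k) (tl p)
              ((free k G m).map (uHom X) (φ.app X v))
            - Finsupp.lapply (R := k) (tl p)
              (φ.app ((iota G).obj X) (V.map (uHom ((iota G).obj X)) v)) := by
        erw [cF_apply, hcond.1, hcond.2, aHom_iota, phi_nat]
      rw [hcf, sub_smul]
    · rw [eps2_mk_neg k m X _ hcond, smul_zero, smul_zero, smul_zero, sub_zero]
  erw [Finset.sum_congr rfl fun p _ => hterm p, Finset.sum_sub_distrib, claimM, claimM]
  have hAu : (eps1 k m).app X ((free k G m).map (uHom X) (φ.app X v)) = φ.app X v :=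
    ConcreteCategory.congr_hom (comp_uHom_eps1 k m X) (φ.app X v)
  show (eps1 k m).app X (φ.app ((iota G).obj X) (V.map (uHom ((iota G).obj X)) v)) + _ = _
  rw [add_comm, sub_add_cancel, hAu]

end Recon

end FIG
/-- **Theorem (coinduction on free modules for `FI_G`).**
Let `k` be a commutative ring, `G` a finite group and `C = FI_G`. For every `m ∈ ℕ`,
if `Q` is a right adjoint of the shift functor `S` (the coinduction functor), then
`Q(kC e_m)` is isomorphic, as a `C`-module, to `kC e_m ⊕ kC e_{m+1}`. -/
theorem FIG.coinduction_of_free (k : Type) [CommRing k] (G : Type) [Group G] [Finite G]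
    (m : ℕ) (Q : (FIG G ⥤ ModuleCat k) ⥤ (FIG G ⥤ ModuleCat k)) (adj : FIG.S k G ⊣ Q) :
    Nonempty (Q.obj (FIG.free k G m) ≅ FIG.free k G m ⊞ FIG.free k G (m + 1)) := by
  classical
  let i₁ : FIG.free k G m ⟶ Q.obj (FIG.free k G m) :=
    (adj.homEquiv (FIG.free k G m) (FIG.free k G m)) (FIG.eps1 k m)
  let i₂ : FIG.free k G (m + 1) ⟶ Q.obj (FIG.free k G m) :=
    (adj.homEquiv (FIG.free k G (m + 1)) (FIG.free k G m)) (FIG.eps2 k m)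
  let φ₀ : (FIG.S k G).obj (Q.obj (FIG.free k G m)) ⟶ FIG.free k G m :=
    adj.counit.app (FIG.free k G m)
  let p₁ : Q.obj (FIG.free k G m) ⟶ FIG.free k G m := FIG.psi1 k φ₀
  let p₂ : Q.obj (FIG.free k G m) ⟶ FIG.free k G (m + 1) := FIG.psi2 k φ₀
  have hi₁ : (FIG.S k G).map i₁ ≫ adj.counit.app (FIG.free k G m) = FIG.eps1 k m := by
    have h := adj.homEquiv_counit (X := FIG.free k G m) (Y := FIG.free k G m) (g := i₁)
    rw [← h]
    exact (adj.homEquiv _ _).symm_apply_apply (FIG.eps1 k m)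
  have hi₂ : (FIG.S k G).map i₂ ≫ adj.counit.app (FIG.free k G m) = FIG.eps2 k m := by
    have h := adj.homEquiv_counit (X := FIG.free k G (m + 1)) (Y := FIG.free k G m)
      (g := i₂)
    rw [← h]
    exact (adj.homEquiv _ _).symm_apply_apply (FIG.eps2 k m)
  have h11 : i₁ ≫ p₁ = 𝟙 (FIG.free k G m) := by
    show i₁ ≫ FIG.psi1 k φ₀ = _
    rw [← FIG.psi1_Smap, hi₁, FIG.psi1_eps1]
  have h12 : i₁ ≫ p₂ = 0 := by
    show i₁ ≫ FIG.psi2 k φ₀ = _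
    rw [← FIG.psi2_Smap, hi₁, FIG.psi2_eps1]
  have h21 : i₂ ≫ p₁ = 0 := by
    show i₂ ≫ FIG.psi1 k φ₀ = _
    rw [← FIG.psi1_Smap, hi₂, FIG.psi1_eps2]
  have h22 : i₂ ≫ p₂ = 𝟙 (FIG.free k G (m + 1)) := by
    show i₂ ≫ FIG.psi2 k φ₀ = _
    rw [← FIG.psi2_Smap, hi₂, FIG.psi2_eps2]
  have h5 : p₁ ≫ i₁ + p₂ ≫ i₂ = 𝟙 (Q.obj (FIG.free k G m)) := by
    apply Equiv.injective (adj.homEquiv (Q.obj (FIG.free k G m)) (FIG.free k G m)).symm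
    rw [adj.homEquiv_counit, adj.homEquiv_counit, CategoryTheory.Functor.map_id, Category.id_comp]
    have hadd : (FIG.S k G).map (p₁ ≫ i₁ + p₂ ≫ i₂)
        = (FIG.S k G).map (p₁ ≫ i₁) + (FIG.S k G).map (p₂ ≫ i₂) := rfl
    rw [hadd, Preadditive.add_comp, CategoryTheory.Functor.map_comp, CategoryTheory.Functor.map_comp,
      Category.assoc, Category.assoc, hi₁, hi₂]
    exact FIG.recon k φ₀
  exact ⟨{
    hom := Limits.biprod.lift p₁ p₂
    inv := Limits.biprod.desc i₁ i₂
    hom_inv_id := by rw [Limits.biprod.lift_desc]; exact h5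
    inv_hom_id := by
      refine Limits.biprod.hom_ext _ _ ?_ ?_ <;>
        refine Limits.biprod.hom_ext' _ _ ?_ ?_ <;>
        simp [h11, h12, h21, h22] }⟩
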